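/- Let π be a group as in the Setup. Then for all γ, δ ∈ π and b, c ∈ π∖{e}, either H_{γ,b} = H_{δ,c} or H_{γ,b} ∩ H_{δ,c} = {(e,e)}. -/

import Mathlib

/-- The diagonal homomorphism `π → π × π`. -/
def diagHom (π : Type*) [Group π] : π →* π × π :=
  MonoidHom.prod (MonoidHom.id π) (MonoidHom.id π)

/-- The subgroup `H_{γ,S} = (γ,e)·Δ(Z_π(S))·(γ⁻¹,e)` of `π × π`. -/
def Hsub {π : Type*} [Group π] (γ : π) (S : Set π) : Subgroup (π × π) :=
  Subgroup.map (MulAut.conj ((γ, (1 : π)) : π × π)).toMonoidHom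
    (Subgroup.map (diagHom π) (Subgroup.centralizer S))

/-- A family `P` of subgroups of `π` is a malnormal collection if for all `i, j` and `g ∈ π`,
either `gP_ig⁻¹ ∩ P_j = {e}`, or `i = j` and `g ∈ P_i`. -/
def IsMalnormalCollection {π : Type*} [Group π] {I : Type*} (P : I → Subgroup π) : Prop :=
  ∀ i j : I, ∀ g : π,
    Subgroup.map (MulAut.conj g).toMonoidHom (P i) ⊓ P j = ⊥ ∨ (i = j ∧ g ∈ P i)

lemma mem_Hsub {π : Type*} [Group π] (γ : π) (S : Set π) (p : π × π) :
    p ∈ Hsub γ S ↔ p.2 ∈ Subgroup.centralizer S ∧ p.1 = γ * p.2 * γ⁻¹ := by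
  simp only [Hsub, Subgroup.mem_map, diagHom, MulEquiv.coe_toMonoidHom, MulAut.conj_apply,
    MonoidHom.prod_apply, MonoidHom.id_apply]
  constructor
  · rintro ⟨q, ⟨z, hz, rfl⟩, rfl⟩
    simp [Prod.ext_iff, hz]
  · rintro ⟨h2, h1⟩
    exact ⟨(p.2, p.2), ⟨p.2, h2, rfl⟩, by simp [Prod.ext_iff, h1.symm]⟩

lemma mem_cent_conj {π : Type*} [Group π] {g b x : π} :
    x ∈ Subgroup.centralizer ({b} : Set π) ↔
      g * x * g⁻¹ ∈ Subgroup.centralizer ({g * b * g⁻¹} : Set π) := by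
  have h1 : ∀ u v : π, g * u * g⁻¹ * (g * v * g⁻¹) = g * (u * v) * g⁻¹ := by intros; group
  rw [Subgroup.mem_centralizer_singleton_iff, Subgroup.mem_centralizer_singleton_iff, h1, h1]
  exact ⟨fun h => by rw [h], fun h => mul_left_cancel (mul_right_cancel h)⟩

lemma cent_eq_of_malnormal {π : Type*} [Group π] {I : Type*} (P : I → Subgroup π)
    (hmal : IsMalnormalCollection P) (hab : ∀ i : I, IsMulCommutative (P i))
    (i : I) {p : π} (hp : p ∈ P i) (hne : p ≠ 1) :
    Subgroup.centralizer ({p} : Set π) = P i := by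
  ext x
  rw [Subgroup.mem_centralizer_singleton_iff]
  constructor
  · intro hx
    rcases hmal i i x with h | h
    · exfalso; apply hne
      have hmem : p ∈ Subgroup.map (MulAut.conj x).toMonoidHom (P i) ⊓ P i := by
        refine ⟨⟨p, hp, ?_⟩, hp⟩
        simp only [MulEquiv.coe_toMonoidHom, MulAut.conj_apply]
        rw [hx]; group
      rw [h] at hmem
      exact hmem
    · exact h.2
  · intro hx
    haveI := hab i
    exact Subgroup.mul_comm_of_mem_isMulCommutative (P i) hx hp

theorem key {π : Type*} [Group π] {I : Type*} (P : I → Subgroup π)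
    (hmal : IsMalnormalCollection P)
    (hab : ∀ i : I, IsMulCommutative (P i))
    (hcyc : ∀ b : π, (¬ ∃ (i : I) (g : π), g * b * g⁻¹ ∈ P i) →
      IsCyclic (Subgroup.centralizer ({b} : Set π)))
    (b : π) (hb : b ≠ 1) :
    (∀ x ∈ Subgroup.centralizer ({b} : Set π), ∀ y ∈ Subgroup.centralizer ({b} : Set π),
        x * y = y * x) ∧
    (∀ z ∈ Subgroup.centralizer ({b} : Set π), z ≠ 1 →
        Subgroup.centralizer ({z} : Set π) = Subgroup.centralizer ({b} : Set π)) := by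
  by_cases hc : ∃ (i : I) (g : π), g * b * g⁻¹ ∈ P i
  · -- Case A
    obtain ⟨i, g, hg⟩ := hc
    have hgb1 : g * b * g⁻¹ ≠ 1 := by
      intro h; apply hb
      have := congrArg (fun u => g⁻¹ * u * g) h
      simpa [mul_assoc] using this
    have hZ : Subgroup.centralizer ({g * b * g⁻¹} : Set π) = P i :=
      cent_eq_of_malnormal P hmal hab i hg hgb1
    have hmemP : ∀ x : π, x ∈ Subgroup.centralizer ({b} : Set π) ↔ g * x * g⁻¹ ∈ P i := by
      intro x; rw [mem_cent_conj (g := g), hZ]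
    constructor
    · intro x hx y hy
      haveI := hab i
      have := Subgroup.mul_comm_of_mem_isMulCommutative (P i) ((hmemP x).1 hx) ((hmemP y).1 hy)
      have h1 : ∀ u v : π, g * u * g⁻¹ * (g * v * g⁻¹) = g * (u * v) * g⁻¹ := by intros; group
      rw [h1, h1] at this
      exact mul_left_cancel (mul_right_cancel this)
    · intro z hz hz1
      have hgz : g * z * g⁻¹ ∈ P i := (hmemP z).1 hz
      have hgz1 : g * z * g⁻¹ ≠ 1 := by
        intro h; apply hz1
        have := congrArg (fun u => g⁻¹ * u * g) h
        simpa [mul_assoc] using this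
      have hZz : Subgroup.centralizer ({g * z * g⁻¹} : Set π) = P i :=
        cent_eq_of_malnormal P hmal hab i hgz hgz1
      ext x
      rw [mem_cent_conj (g := g) (b := z), hZz, hmemP x]
  · -- Case B
    haveI := hcyc b hc
    obtain ⟨t', ht'⟩ := IsCyclic.exists_generator (α := Subgroup.centralizer ({b} : Set π))
    set t : π := (t' : π) with htdef
    have htmem : t ∈ Subgroup.centralizer ({b} : Set π) := t'.2
    have hbmem : b ∈ Subgroup.centralizer ({b} : Set π) :=
      Subgroup.mem_centralizer_singleton_iff.2 rfl
    have hpow : ∀ x ∈ Subgroup.centralizer ({b} : Set π), ∃ k : ℤ, x = t ^ k := by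
      intro x hx
      obtain ⟨k, hk⟩ := ht' ⟨x, hx⟩
      refine ⟨k, ?_⟩
      have h2 := congrArg (fun u : Subgroup.centralizer ({b} : Set π) => (u : π)) hk
      simpa [htdef] using h2.symm
    obtain ⟨m, hm⟩ := hpow b hbmem
    have ht1 : t ≠ 1 := by intro h1; exact hb (by rw [hm, h1]; simp)
    -- Z t = Z b
    have hZt : Subgroup.centralizer ({t} : Set π) = Subgroup.centralizer ({b} : Set π) := by
      ext x
      rw [Subgroup.mem_centralizer_singleton_iff, Subgroup.mem_centralizer_singleton_iff]
      constructor
      · intro h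
        rw [hm]
        have hcxt : Commute x t := h
        exact hcxt.zpow_right m
      · intro h
        obtain ⟨k, hk⟩ := hpow x (Subgroup.mem_centralizer_singleton_iff.2 h)
        rw [hk]
        exact ((Commute.refl t).zpow_left k)
    constructor
    · intro x hx y hy
      obtain ⟨n, hn⟩ := hpow x hx
      obtain ⟨k, hk⟩ := hpow y hy
      rw [hn, hk]
      exact (((Commute.refl t).zpow_left n).zpow_right k)
    · intro z hz hz1
      obtain ⟨k, hk⟩ := hpow z hz
      have htz : t ∈ Subgroup.centralizer ({z} : Set π) := by
        rw [Subgroup.mem_centralizer_singleton_iff, hk]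
        exact ((Commute.refl t).zpow_right k)
      -- z is not conjugate into any P i
      have hznc : ¬ ∃ (i : I) (h : π), h * z * h⁻¹ ∈ P i := by
        rintro ⟨i, h, hhz⟩
        apply hc
        have hhz1 : h * z * h⁻¹ ≠ 1 := by
          intro he; apply hz1
          have := congrArg (fun u => h⁻¹ * u * h) he
          simpa [mul_assoc] using this
        have hZz : Subgroup.centralizer ({h * z * h⁻¹} : Set π) = P i :=
          cent_eq_of_malnormal P hmal hab i hhz hhz1
        have hht : h * t * h⁻¹ ∈ P i := by
          rw [← hZz]; exact (mem_cent_conj (g := h)).1 htz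
        have hht1 : h * t * h⁻¹ ≠ 1 := by
          intro he; apply ht1
          have := congrArg (fun u => h⁻¹ * u * h) he
          simpa [mul_assoc] using this
        have hZht : Subgroup.centralizer ({h * t * h⁻¹} : Set π) = P i :=
          cent_eq_of_malnormal P hmal hab i hht hht1
        refine ⟨i, h, ?_⟩
        rw [← hZht]
        exact (mem_cent_conj (g := h)).1 (hZt ▸ hbmem)
      haveI := hcyc z hznc
      obtain ⟨s', hs'⟩ := IsCyclic.exists_generator (α := Subgroup.centralizer ({z} : Set π))
      set s : π := (s' : π) with hsdef
      have hspow : ∀ x ∈ Subgroup.centralizer ({z} : Set π), ∃ j : ℤ, x = s ^ j := by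
        intro x hx
        obtain ⟨j, hj⟩ := hs' ⟨x, hx⟩
        refine ⟨j, ?_⟩
        have h2 := congrArg (fun u : Subgroup.centralizer ({z} : Set π) => (u : π)) hj
        simpa [hsdef] using h2.symm
      obtain ⟨j, hj⟩ := hspow t htz
      have hsZt : s ∈ Subgroup.centralizer ({t} : Set π) := by
        rw [Subgroup.mem_centralizer_singleton_iff, hj]
        exact ((Commute.refl s).zpow_right j)
      have hsZb : s ∈ Subgroup.centralizer ({b} : Set π) := hZt ▸ hsZt
      ext x
      constructor
      · intro hx
        obtain ⟨n, hn⟩ := hspow x hx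
        rw [hn]
        exact Subgroup.zpow_mem _ hsZb n
      · intro hx
        obtain ⟨n, hn⟩ := hpow x hx
        rw [Subgroup.mem_centralizer_singleton_iff, hn, hk]
        exact (((Commute.refl t).zpow_left n).zpow_right k)

/-- For a group `π` as in the Setup, for all `γ, δ ∈ π` and `b, c ∈ π∖{e}`, either
`H_{γ,b} = H_{δ,c}` or `H_{γ,b} ∩ H_{δ,c} = {(e,e)}`. -/
theorem Hsub_eq_or_disjoint {π : Type*} [Group π] {I : Type*} (P : I → Subgroup π)
    (htf : ∀ g : π, g ≠ 1 → ¬IsOfFinOrder g)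
    (hmal : IsMalnormalCollection P)
    (hab : ∀ i : I, IsMulCommutative (P i))
    (hcyc : ∀ b : π, (¬ ∃ (i : I) (g : π), g * b * g⁻¹ ∈ P i) →
      IsCyclic (Subgroup.centralizer ({b} : Set π))) :
    ∀ γ δ b c : π, b ≠ 1 → c ≠ 1 →
      Hsub γ ({b} : Set π) = Hsub δ ({c} : Set π) ∨
      Hsub γ ({b} : Set π) ⊓ Hsub δ ({c} : Set π) = ⊥ := by

  intro γ δ b c hb hc
  by_cases hdisj : Hsub γ ({b} : Set π) ⊓ Hsub δ ({c} : Set π) = ⊥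
  · exact Or.inr hdisj
  left
  obtain ⟨p, hp, hp1⟩ : ∃ p ∈ Hsub γ ({b} : Set π) ⊓ Hsub δ ({c} : Set π), p ≠ 1 := by
    by_contra h
    push_neg at h
    exact hdisj ((Subgroup.eq_bot_iff_forall _).2 h)
  rw [Subgroup.mem_inf, mem_Hsub, mem_Hsub] at hp
  obtain ⟨⟨hyb, hx1⟩, hyc, hx2⟩ := hp
  set z := p.2 with hzdef
  have hz1 : z ≠ 1 := by
    intro h
    apply hp1
    have h1 : p.1 = 1 := by rw [hx1, h]; simp
    exact Prod.ext h1 h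
  obtain ⟨habb, heqb⟩ := key P hmal hab hcyc b hb
  obtain ⟨habc, heqc⟩ := key P hmal hab hcyc c hc
  have hZzb := heqb z hyb hz1
  have hZzc := heqc z hyc hz1
  have he : γ * z * γ⁻¹ = δ * z * δ⁻¹ := hx1.symm.trans hx2
  have hg : δ⁻¹ * γ ∈ Subgroup.centralizer ({b} : Set π) := by
    rw [← hZzb, Subgroup.mem_centralizer_singleton_iff]
    have h3 : δ⁻¹ * (γ * z * γ⁻¹) * γ = δ⁻¹ * (δ * z * δ⁻¹) * γ := by rw [he]
    have l : δ⁻¹ * (γ * z * γ⁻¹) * γ = δ⁻¹ * γ * z := by group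
    have r : δ⁻¹ * (δ * z * δ⁻¹) * γ = z * (δ⁻¹ * γ) := by group
    rw [l, r] at h3
    exact h3
  have hconj : ∀ w ∈ Subgroup.centralizer ({b} : Set π), γ * w * γ⁻¹ = δ * w * δ⁻¹ := by
    intro w hw
    have hcomm : (δ⁻¹ * γ) * w = w * (δ⁻¹ * γ) := habb _ hg _ hw
    have h5 : δ * ((δ⁻¹ * γ) * w) * γ⁻¹ = δ * (w * (δ⁻¹ * γ)) * γ⁻¹ := by rw [hcomm]
    have l : δ * ((δ⁻¹ * γ) * w) * γ⁻¹ = γ * w * γ⁻¹ := by group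
    have r : δ * (w * (δ⁻¹ * γ)) * γ⁻¹ = δ * w * δ⁻¹ := by group
    rw [l, r] at h5
    exact h5
  have hZbc : Subgroup.centralizer ({b} : Set π) = Subgroup.centralizer ({c} : Set π) :=
    hZzb.symm.trans hZzc
  ext q
  rw [mem_Hsub, mem_Hsub, ← hZbc]
  constructor
  · rintro ⟨hq2, hq1⟩
    exact ⟨hq2, by rw [hq1, hconj q.2 hq2]⟩
  · rintro ⟨hq2, hq1⟩
    exact ⟨hq2, by rw [hq1, ← hconj q.2 hq2]⟩
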